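/- Let μ, ν be probability measures on ℝ^d with finite first moments and let K(x,y) = -‖x - y‖ be the Riesz kernel. Then MMD²(μ,ν) := ∬K dμdμ - 2∬K dμdν + ∬K dνdν ≥ 0, with equality if and only if μ = ν. -/

import Mathlib

open MeasureTheory

noncomputable def MMD2 {d : ℕ} (μ ν : Measure (EuclideanSpace ℝ (Fin d))) : ℝ :=
  (∫ x, ∫ y, -‖x - y‖ ∂μ ∂μ) - 2 * (∫ x, ∫ y, -‖x - y‖ ∂ν ∂μ) +
    ∫ x, ∫ y, -‖x - y‖ ∂ν ∂ν

open MeasureTheory Real Set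
open scoped NNReal ENNReal

noncomputable def C0 : ℝ := ∫ u in Ioi (0:ℝ), (1 - rexp (-(u^2))) / u^2

lemma phi_cont : Measurable fun u : ℝ => (1 - rexp (-(u^2))) / u^2 := by
  measurability

lemma phi_nonneg {u : ℝ} : 0 ≤ (1 - rexp (-(u^2))) / u^2 := by
  apply div_nonneg _ (sq_nonneg u)
  simp [Real.exp_le_one_iff]
  positivity

lemma phi_le_one {u : ℝ} : (1 - rexp (-(u^2))) / u^2 ≤ 1 := by
  rcases eq_or_ne u 0 with h | h
  · simp [h]
  · rw [div_le_one (by positivity)]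
    nlinarith [Real.add_one_le_exp (-(u^2)), Real.exp_pos (-(u^2))]

lemma intC : IntegrableOn (fun u : ℝ => (1 - rexp (-(u^2))) / u^2) (Ioi 0) := by
  rw [← Ioc_union_Ioi_eq_Ioi (zero_le_one)]
  apply IntegrableOn.union
  · apply Integrable.mono' (integrable_const 1) phi_cont.aestronglyMeasurable
    filter_upwards with u
    rw [Real.norm_eq_abs, abs_of_nonneg phi_nonneg]
    exact phi_le_one
  · apply Integrable.mono' (g := fun u => u ^ (-2 : ℝ)) (integrableOn_Ioi_rpow_of_lt (by norm_num) one_pos) phi_cont.aestronglyMeasurable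
    filter_upwards [ae_restrict_mem measurableSet_Ioi] with u hu
    have hu1 : (0:ℝ) < u := lt_of_lt_of_le one_pos hu.le
    rw [Real.norm_eq_abs, abs_of_nonneg phi_nonneg, Real.rpow_neg hu1.le, Real.rpow_two]
    rw [div_le_iff₀ (by positivity), inv_mul_cancel₀ (by positivity)]
    nlinarith [Real.exp_pos (-(u^2))]

lemma C0_pos : 0 < C0 := by
  rw [C0]
  rw [setIntegral_pos_iff_support_of_nonneg_ae (Filter.Eventually.of_forall fun u => phi_nonneg) intC]
  have hsub : Ioi (1:ℝ) ⊆ (Function.support fun u : ℝ => (1 - rexp (-(u^2))) / u^2) ∩ Ioi 0 := by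
    intro u hu
    have hu1 : (1:ℝ) < u := hu
    constructor
    · have h1 : rexp (-(u^2)) < 1 := by
        rw [Real.exp_lt_one_iff]; nlinarith
      have : 0 < (1 - rexp (-(u^2))) / u^2 := div_pos (by linarith) (by nlinarith)
      exact ne_of_gt this
    · exact lt_trans one_pos hu1
  calc (0:ENNReal) < volume (Ioi (1:ℝ)) := by simp
    _ ≤ _ := measure_mono hsub

lemma psi_meas (a : ℝ) : Measurable fun t : ℝ => (1 - rexp (-(t^2 * a^2))) / t^2 := by
  measurability

lemma psi_nonneg (a t : ℝ) : 0 ≤ (1 - rexp (-(t^2 * a^2))) / t^2 := by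
  apply div_nonneg _ (sq_nonneg t)
  simp [Real.exp_le_one_iff]
  positivity

lemma psi_int (a : ℝ) : IntegrableOn (fun t : ℝ => (1 - rexp (-(t^2 * a^2))) / t^2) (Ioi 0) := by
  rw [← Ioc_union_Ioi_eq_Ioi (zero_le_one)]
  apply IntegrableOn.union
  · apply Integrable.mono' (integrable_const (a^2)) (psi_meas a).aestronglyMeasurable
    filter_upwards with t
    rw [Real.norm_eq_abs, abs_of_nonneg (psi_nonneg a t)]
    rcases eq_or_ne t 0 with h | h
    · simp [h]; positivity
    · rw [div_le_iff₀ (by positivity)]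
      nlinarith [Real.add_one_le_exp (-(t^2 * a^2)), Real.exp_pos (-(t^2 * a^2)), sq_nonneg (t*a)]
  · apply Integrable.mono' (g := fun t => t ^ (-2 : ℝ)) (integrableOn_Ioi_rpow_of_lt (by norm_num) one_pos) (psi_meas a).aestronglyMeasurable
    filter_upwards [ae_restrict_mem measurableSet_Ioi] with t ht
    have ht1 : (0:ℝ) < t := lt_of_lt_of_le one_pos ht.le
    rw [Real.norm_eq_abs, abs_of_nonneg (psi_nonneg a t), Real.rpow_neg ht1.le, Real.rpow_two]
    rw [div_le_iff₀ (by positivity), inv_mul_cancel₀ (by positivity)]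
    nlinarith [Real.exp_pos (-(t^2 * a^2))]

lemma psi_eq {a : ℝ} (ha : 0 ≤ a) :
    ∫ t in Ioi (0:ℝ), (1 - rexp (-(t^2 * a^2))) / t^2 = C0 * a := by
  rcases eq_or_lt_of_le ha with h | h
  · simp [← h]
  · have key : ∀ t : ℝ, (1 - rexp (-(t^2 * a^2))) / t^2
        = a^2 • ((1 - rexp (-((a*t)^2))) / (a*t)^2) := by
      intro t
      rcases eq_or_ne t 0 with h0 | h0
      · simp [h0]
      · rw [smul_eq_mul]
        have ha2 : a^2 ≠ 0 := by positivity
        have ht2 : t^2 ≠ 0 := by positivity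
        field_simp
    simp_rw [key]
    rw [integral_smul, integral_comp_mul_left_Ioi (fun u => (1 - rexp (-(u^2))) / u^2) 0 h, mul_zero]
    rw [smul_smul, smul_eq_mul, ← C0]
    field_simp

section Euclid

variable {d : ℕ}

local notation "E" => EuclideanSpace ℝ (Fin d)

lemma r_meas : Continuous fun p : E × E => ‖p.1 - p.2‖ :=
  (continuous_fst.sub continuous_snd).norm

lemma r_int (α β : Measure E) [IsProbabilityMeasure α] [IsProbabilityMeasure β]
    (hα : Integrable (fun x => ‖x‖) α) (hβ : Integrable (fun x => ‖x‖) β) :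
    Integrable (fun p : E × E => ‖p.1 - p.2‖) (α.prod β) := by
  have hm : AEStronglyMeasurable (fun p : E × E => ‖p.1 - p.2‖) (α.prod β) :=
    r_meas.aestronglyMeasurable
  rw [integrable_prod_iff hm]
  constructor
  · refine Filter.Eventually.of_forall fun x => ?_
    apply Integrable.mono' ((integrable_const ‖x‖).add hβ)
      (((continuous_const.sub continuous_id).norm).aestronglyMeasurable : AEStronglyMeasurable (fun y : E => ‖x - y‖) β)
    exact Filter.Eventually.of_forall fun y => by
      simpa using norm_sub_le x y
  · apply Integrable.mono' (hα.add (integrable_const (∫ y, ‖y‖ ∂β)))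
    · exact hm.norm.integral_prod_right'
    · refine Filter.Eventually.of_forall fun x => ?_
      rw [Real.norm_eq_abs, abs_of_nonneg (integral_nonneg fun y => by positivity)]
      calc ∫ y, ‖‖x - y‖‖ ∂β ≤ ∫ y, (‖x‖ + ‖y‖) ∂β := by
            apply integral_mono_of_nonneg (Filter.Eventually.of_forall fun y => by positivity)
              ((integrable_const ‖x‖).add hβ)
            exact Filter.Eventually.of_forall fun y => by simpa using norm_sub_le x y
        _ = ‖x‖ + ∫ y, ‖y‖ ∂β := by
            rw [integral_add (integrable_const _) hβ, integral_const]
            simp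

noncomputable def Kt (α β : Measure E) (t : ℝ) : ℝ :=
  ∫ p : E × E, rexp (-(t^2 * ‖p.1 - p.2‖^2)) ∂(α.prod β)

lemma exp_int (α β : Measure E) [IsProbabilityMeasure α] [IsProbabilityMeasure β] (t : ℝ) :
    Integrable (fun p : E × E => rexp (-(t^2 * ‖p.1 - p.2‖^2))) (α.prod β) := by
  have hc : Continuous fun p : E × E => rexp (-(t^2 * ‖p.1 - p.2‖^2)) :=
    Real.continuous_exp.comp (continuous_const.mul (r_meas.pow 2)).neg
  apply Integrable.mono' (integrable_const 1) hc.aestronglyMeasurable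
  refine Filter.Eventually.of_forall fun p => ?_
  rw [Real.norm_eq_abs, abs_of_nonneg (Real.exp_nonneg _), Real.exp_le_one_iff]
  exact neg_nonpos.mpr (by positivity)

lemma lemA (α β : Measure E) [IsProbabilityMeasure α] [IsProbabilityMeasure β]
    (hα : Integrable (fun x => ‖x‖) α) (hβ : Integrable (fun x => ‖x‖) β) :
    IntegrableOn (fun t => (Kt α β t - 1)/t^2) (Ioi 0) ∧
    ∫ t in Ioi (0:ℝ), (Kt α β t - 1)/t^2 = C0 * (∫ x, ∫ y, -‖x - y‖ ∂β ∂α) := by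
  set F : (E × E) → ℝ → ℝ :=
    fun p t => (rexp (-(t^2 * ‖p.1 - p.2‖^2)) - 1)/t^2 with hF
  have hFmeas : AEStronglyMeasurable (Function.uncurry F)
      ((α.prod β).prod ((volume : Measure ℝ).restrict (Ioi 0))) := by
    apply Measurable.aestronglyMeasurable
    fun_prop
  have hFneg : ∀ p t, F p t = -((1 - rexp (-(t^2 * ‖p.1 - p.2‖^2)))/t^2) := by
    intro p t; rw [hF]; ring
  have hsec : ∀ p : E × E, IntegrableOn (F p) (Ioi 0) := by
    intro p
    have := (psi_int ‖p.1 - p.2‖).neg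
    apply this.congr
    exact Filter.Eventually.of_forall fun t => (hFneg p t).symm
  have hFnorm : ∀ p : E × E, ∀ t : ℝ, ‖F p t‖ = (1 - rexp (-(t^2 * ‖p.1 - p.2‖^2)))/t^2 := by
    intro p t
    rw [hFneg, norm_neg, Real.norm_eq_abs, abs_of_nonneg (psi_nonneg _ t)]
  have hnormint : ∀ p : E × E, ∫ t in Ioi (0:ℝ), ‖F p t‖ = C0 * ‖p.1 - p.2‖ := by
    intro p
    rw [← psi_eq (norm_nonneg (p.1 - p.2))]
    exact integral_congr_ae (Filter.Eventually.of_forall fun t => hFnorm p t)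
  have hint : Integrable (Function.uncurry F)
      ((α.prod β).prod ((volume : Measure ℝ).restrict (Ioi 0))) := by
    rw [integrable_prod_iff hFmeas]
    refine ⟨Filter.Eventually.of_forall fun p => hsec p, ?_⟩
    apply Integrable.congr ((r_int α β hα hβ).const_mul C0)
    exact Filter.Eventually.of_forall fun p => (hnormint p).symm
  have swap := integral_integral_swap hint
  -- LHS computation
  have hL : ∫ p : E × E, ∫ t in Ioi (0:ℝ), F p t ∂(volume) ∂(α.prod β)
      = -(C0 * ∫ p : E × E, ‖p.1 - p.2‖ ∂(α.prod β)) := by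
    rw [← integral_const_mul, ← integral_neg]
    apply integral_congr_ae
    refine Filter.Eventually.of_forall fun p => ?_
    have : ∫ t in Ioi (0:ℝ), F p t = -∫ t in Ioi (0:ℝ), (1 - rexp (-(t^2 * ‖p.1 - p.2‖^2)))/t^2 := by
      rw [← integral_neg]
      exact integral_congr_ae (Filter.Eventually.of_forall fun t => hFneg p t)
    simp only []
    rw [this, psi_eq (norm_nonneg _)]
  -- identify inner t-integral integrand
  have hR : ∀ t ∈ Ioi (0:ℝ), ∫ p : E × E, F p t ∂(α.prod β) = (Kt α β t - 1)/t^2 := by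
    intro t ht
    have ht2 : (t:ℝ)^2 ≠ 0 := pow_ne_zero 2 (ne_of_gt ht)
    simp_rw [hF, div_eq_mul_inv, integral_mul_const]
    rw [integral_sub (exp_int α β t) (integrable_const 1), integral_const]
    simp [Kt]
  have hIntInner : IntegrableOn (fun t => ∫ p : E × E, F p t ∂(α.prod β)) (Ioi 0) :=
    hint.integral_prod_right
  constructor
  · exact hIntInner.congr_fun hR measurableSet_Ioi
  · have e1 : ∫ t in Ioi (0:ℝ), (Kt α β t - 1)/t^2
        = ∫ t in Ioi (0:ℝ), ∫ p : E × E, F p t ∂(α.prod β) :=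
      (setIntegral_congr_fun measurableSet_Ioi fun t ht => (hR t ht).symm)
    rw [e1, ← swap, hL]
    have e2 : ∫ x, ∫ y, -‖x - y‖ ∂β ∂α = ∫ p : E × E, -‖p.1 - p.2‖ ∂(α.prod β) :=
      (integral_prod _ (r_int α β hα hβ).neg).symm
    rw [e2, integral_neg]
    ring


lemma gauss_int {b : ℝ} (hb : 0 < b) : Integrable (fun v : E => rexp (-b * ‖v‖^2)) := by
  have h := (GaussianFourier.integrable_cexp_neg_mul_sq_norm_add (V := E)
      (b := (b:ℂ)) (by simpa using hb) 0 0).norm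
  apply h.congr
  refine Filter.Eventually.of_forall fun v => ?_
  simp [Complex.norm_exp, ← Complex.ofReal_pow]

lemma gauss_pos {b : ℝ} (hb : 0 < b) : 0 < ∫ v : E, rexp (-b * ‖v‖^2) := by
  rw [GaussianFourier.integral_rexp_neg_mul_sq_norm hb]
  positivity

lemma norm_split (x y z : E) :
    ‖x - z‖^2 + ‖y - z‖^2 = ‖x - y‖^2/2 + 2*‖z - (2:ℝ)⁻¹ • (x + y)‖^2 := by
  have h : ∀ a b : E, ‖a - b‖^2 = ‖a‖^2 - 2*(inner ℝ a b : ℝ) + ‖b‖^2 := fun a b =>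
    norm_sub_sq_real a b
  rw [h x z, h y z, h x y, h z ((2:ℝ)⁻¹ • (x + y))]
  rw [norm_smul, inner_smul_right, inner_add_right, mul_pow]
  rw [norm_add_sq_real]
  rw [real_inner_comm x z, real_inner_comm y z]
  simp only [Real.norm_eq_abs]
  rw [abs_of_pos (by norm_num : (0:ℝ) < (2:ℝ)⁻¹)]
  ring

lemma gauss_pt (t : ℝ) (x y z : E) :
    rexp (-(2*t^2) * ‖x - z‖^2) * rexp (-(2*t^2) * ‖y - z‖^2)
      = rexp (-(t^2 * ‖x - y‖^2)) * rexp (-(4*t^2) * ‖z - (2:ℝ)⁻¹ • (x + y)‖^2) := by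
  rw [← Real.exp_add, ← Real.exp_add]
  congr 1
  have := norm_split x y z
  nlinarith [this]

lemma gauss_conv {t : ℝ} (ht : 0 < t) (x y : E) :
    ∫ z : E, rexp (-(2*t^2) * ‖x - z‖^2) * rexp (-(2*t^2) * ‖y - z‖^2)
      = rexp (-(t^2 * ‖x - y‖^2)) * ∫ z : E, rexp (-(4*t^2) * ‖z‖^2) := by
  simp_rw [gauss_pt t x y, integral_const_mul]
  congr 1
  exact integral_sub_right_eq_self (fun z : E => rexp (-(4*t^2) * ‖z‖^2)) ((2:ℝ)⁻¹ • (x + y))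


noncomputable def pfun (α : Measure E) (t : ℝ) (z : E) : ℝ :=
  ∫ x, rexp (-(2*t^2) * ‖x - z‖^2) ∂α

lemma pfun_cont (α : Measure E) [IsProbabilityMeasure α] (t : ℝ) :
    Continuous (pfun α t) := by
  apply continuous_of_dominated (bound := fun _ => (1:ℝ))
  · intro z
    exact ((Real.continuous_exp.comp
      ((continuous_const.mul ((continuous_id.sub continuous_const).norm.pow 2))))).aestronglyMeasurable
  · intro z
    refine Filter.Eventually.of_forall fun x => ?_
    rw [Real.norm_eq_abs, abs_of_nonneg (Real.exp_nonneg _), Real.exp_le_one_iff]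
    nlinarith [sq_nonneg t, sq_nonneg ‖x - z‖]
  · exact integrable_const 1
  · refine Filter.Eventually.of_forall fun x => ?_
    exact Real.continuous_exp.comp
      ((continuous_const.mul ((continuous_const.sub continuous_id).norm.pow 2)))

lemma pfun_nonneg (α : Measure E) (t : ℝ) (z : E) : 0 ≤ pfun α t z :=
  integral_nonneg fun x => Real.exp_nonneg _

lemma mix (α β : Measure E) [IsProbabilityMeasure α] [IsProbabilityMeasure β]
    {t : ℝ} (ht : 0 < t) :
    Integrable (fun z : E => pfun α t z * pfun β t z) volume ∧
    ∫ z : E, pfun α t z * pfun β t z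
      = (∫ z : E, rexp (-(4*t^2) * ‖z‖^2)) * Kt α β t := by
  set G4 : ℝ := ∫ z : E, rexp (-(4*t^2) * ‖z‖^2) with hG4
  set f : (E × E) × E → ℝ :=
    fun q => rexp (-(2*t^2) * ‖q.1.1 - q.2‖^2) * rexp (-(2*t^2) * ‖q.1.2 - q.2‖^2) with hf
  have hfc : Continuous f := by
    apply Continuous.mul
    all_goals
      exact Real.continuous_exp.comp (continuous_const.mul
        (((Continuous.sub (by fun_prop) continuous_snd).norm.pow 2)))
  have hsec : ∀ p : E × E, Integrable (fun z => f (p, z)) volume := by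
    intro p
    have : (fun z => f (p, z)) = fun z =>
        rexp (-(t^2 * ‖p.1 - p.2‖^2)) * rexp (-(4*t^2) * ‖z - (2:ℝ)⁻¹ • (p.1 + p.2)‖^2) := by
      funext z; exact gauss_pt t p.1 p.2 z
    rw [this]
    apply Integrable.const_mul
    exact (gauss_int (by positivity : (0:ℝ) < 4*t^2)).comp_sub_right ((2:ℝ)⁻¹ • (p.1 + p.2))
  have hsecval : ∀ p : E × E, ∫ z, f (p, z) = rexp (-(t^2 * ‖p.1 - p.2‖^2)) * G4 := by
    intro p
    exact gauss_conv ht p.1 p.2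
  have hint : Integrable f ((α.prod β).prod volume) := by
    rw [integrable_prod_iff hfc.aestronglyMeasurable]
    constructor
    · exact Filter.Eventually.of_forall hsec
    · have : (fun p : E × E => ∫ z, ‖f (p, z)‖)
          = fun p : E × E => rexp (-(t^2 * ‖p.1 - p.2‖^2)) * G4 := by
        funext p
        rw [← hsecval p]
        apply integral_congr_ae
        refine Filter.Eventually.of_forall fun z => ?_
        show ‖f (p, z)‖ = f (p, z)
        rw [Real.norm_eq_abs,
          abs_of_nonneg (mul_nonneg (Real.exp_nonneg _) (Real.exp_nonneg _))]
      rw [this]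
      apply Integrable.mono' (integrable_const G4)
        (((Real.continuous_exp.comp (continuous_const.mul (r_meas.pow 2)).neg).mul
          continuous_const).aestronglyMeasurable)
      have hG4pos : 0 < G4 := gauss_pos (by positivity : (0:ℝ) < 4*t^2)
      refine Filter.Eventually.of_forall fun p => ?_
      show ‖rexp (-(t^2 * ‖p.1 - p.2‖^2)) * G4‖ ≤ G4
      rw [Real.norm_eq_abs, abs_of_nonneg (mul_nonneg (Real.exp_nonneg _) hG4pos.le)]
      have h1 : rexp (-(t^2 * ‖p.1 - p.2‖^2)) ≤ 1 := by
        rw [Real.exp_le_one_iff]; nlinarith [sq_nonneg t, sq_nonneg ‖p.1 - p.2‖]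
      nlinarith
  have hinner : ∀ z : E, ∫ p : E × E, f (p, z) ∂(α.prod β) = pfun α t z * pfun β t z := by
    intro z
    exact integral_prod_mul (fun x : E => rexp (-(2*t^2) * ‖x - z‖^2))
      (fun y : E => rexp (-(2*t^2) * ‖y - z‖^2))
  constructor
  · have h := hint.integral_prod_right
    apply h.congr
    exact Filter.Eventually.of_forall fun z => hinner z
  · have h1 : ∫ q, f q ∂((α.prod β).prod volume)
        = ∫ p : E × E, ∫ z : E, f (p, z) ∂volume ∂(α.prod β) := integral_prod f hint
    have h2 : ∫ q, f q ∂((α.prod β).prod volume)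
        = ∫ z : E, ∫ p : E × E, f (p, z) ∂(α.prod β) ∂volume := integral_prod_symm f hint
    rw [h2] at h1
    calc ∫ z : E, pfun α t z * pfun β t z
        = ∫ z : E, ∫ p : E × E, f (p, z) ∂(α.prod β) ∂volume := by
          apply integral_congr_ae
          exact Filter.Eventually.of_forall fun z => (hinner z).symm
      _ = ∫ p : E × E, ∫ z : E, f (p, z) ∂volume ∂(α.prod β) := h1
      _ = ∫ p : E × E, rexp (-(t^2 * ‖p.1 - p.2‖^2)) * G4 ∂(α.prod β) := by
          apply integral_congr_ae
          exact Filter.Eventually.of_forall fun p => hsecval p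
      _ = G4 * Kt α β t := by
          rw [Kt, ← integral_const_mul]
          apply integral_congr_ae
          exact Filter.Eventually.of_forall fun p => by ring

lemma H_nonneg (μ ν : Measure E) [IsProbabilityMeasure μ] [IsProbabilityMeasure ν]
    {t : ℝ} (ht : 0 < t) :
    0 ≤ Kt μ μ t - 2*Kt μ ν t + Kt ν ν t ∧
    (Kt μ μ t - 2*Kt μ ν t + Kt ν ν t = 0 → pfun μ t = pfun ν t) := by
  set G4 : ℝ := ∫ z : E, rexp (-(4*t^2) * ‖z‖^2) with hG4
  have hG4pos : 0 < G4 := gauss_pos (by positivity : (0:ℝ) < 4*t^2)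
  have hmm := mix μ μ ht
  have hmn := mix μ ν ht
  have hnn := mix ν ν ht
  have hint1 : Integrable (fun z : E => pfun μ t z * pfun μ t z
      - 2*(pfun μ t z * pfun ν t z)) volume := hmm.1.sub (hmn.1.const_mul 2)
  have hint2 : Integrable (fun z : E => pfun μ t z * pfun μ t z
      - 2*(pfun μ t z * pfun ν t z) + pfun ν t z * pfun ν t z) volume := hint1.add hnn.1
  have hsq : Integrable (fun z : E => (pfun μ t z - pfun ν t z)^2) volume := by
    apply Integrable.congr hint2
    refine Filter.Eventually.of_forall fun z => ?_
    simp only [Pi.sub_apply, Pi.add_apply]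
    ring
  have hval : ∫ z : E, (pfun μ t z - pfun ν t z)^2
      = G4 * (Kt μ μ t - 2*Kt μ ν t + Kt ν ν t) := by
    have e1 : ∫ z : E, (pfun μ t z - pfun ν t z)^2
        = ∫ z : E, (pfun μ t z * pfun μ t z - 2*(pfun μ t z * pfun ν t z)
            + pfun ν t z * pfun ν t z) := by
      apply integral_congr_ae
      exact Filter.Eventually.of_forall fun z => by ring
    rw [e1, integral_add hint1 hnn.1,
      integral_sub hmm.1 (hmn.1.const_mul 2), integral_const_mul,
      hmm.2, hmn.2, hnn.2]
    ring
  constructor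
  · have h0 : 0 ≤ ∫ z : E, (pfun μ t z - pfun ν t z)^2 :=
      integral_nonneg fun z => sq_nonneg _
    nlinarith
  · intro hzero
    rw [hzero, mul_zero] at hval
    have hae : (fun z : E => (pfun μ t z - pfun ν t z)^2) =ᵐ[volume] 0 := by
      rw [← integral_eq_zero_iff_of_nonneg (fun z => sq_nonneg _) hsq]
      exact hval
    have hae2 : pfun μ t =ᵐ[(volume : Measure E)] pfun ν t := by
      filter_upwards [hae] with z hz
      have : (pfun μ t z - pfun ν t z)^2 = 0 := hz
      have := pow_eq_zero_iff (n := 2) (by norm_num) |>.mp this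
      linarith [sub_eq_zero.mp this]
    exact ((pfun_cont μ t).ae_eq_iff_eq volume (pfun_cont ν t)).mp hae2

noncomputable def G2 (d : ℕ) : ℝ := ∫ v : EuclideanSpace ℝ (Fin d), rexp (-(2:ℝ) * ‖v‖^2)

lemma G2_pos : 0 < G2 d := gauss_pos (by norm_num)

lemma cov {t : ℝ} (ht : 0 < t) (g : E → ℝ) (x : E) :
    ∫ v : E, g (x + t⁻¹ • v) * rexp (-(2:ℝ) * ‖v‖^2)
      = t^d * ∫ z : E, g z * rexp (-(2*t^2) * ‖x - z‖^2) := by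
  have e1 : ∫ z : E, g z * rexp (-(2*t^2) * ‖x - z‖^2)
      = ∫ u : E, g (x + u) * rexp (-(2*t^2) * ‖u‖^2) := by
    rw [← integral_add_left_eq_self (fun z : E => g z * rexp (-(2*t^2) * ‖x - z‖^2)) x]
    apply integral_congr_ae
    refine Filter.Eventually.of_forall fun u => ?_
    have : x - (x + u) = -u := by abel
    simp only [this, norm_neg]
  rw [e1]
  have e2 : ∫ v : E, g (x + t⁻¹ • v) * rexp (-(2:ℝ) * ‖v‖^2)
      = ∫ v : E, (fun u : E => g (x + u) * rexp (-(2*t^2) * ‖u‖^2)) (t⁻¹ • v) := by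
    apply integral_congr_ae
    refine Filter.Eventually.of_forall fun v => ?_
    simp only [norm_smul, Real.norm_eq_abs, abs_of_pos (inv_pos.mpr ht), mul_pow]
    congr 2
    field_simp
  rw [e2, Measure.integral_comp_inv_smul volume
    (fun u : E => g (x + u) * rexp (-(2*t^2) * ‖u‖^2)) t]
  rw [finrank_euclideanSpace_fin, abs_of_pos (pow_pos ht d), smul_eq_mul]

lemma key_int (α : Measure E) [IsProbabilityMeasure α] {t : ℝ} (ht : 0 < t)
    {g : E → ℝ} (hg : Continuous g) {M : ℝ} (hM : ∀ x, |g x| ≤ M) :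
    ∫ x, (∫ v : E, g (x + t⁻¹ • v) * rexp (-(2:ℝ) * ‖v‖^2)) ∂α
      = t^d * ∫ z : E, g z * pfun α t z := by
  have hM0 : 0 ≤ M := le_trans (abs_nonneg _) (hM 0)
  set cst : ℝ := ∫ u : E, rexp (-(2*t^2) * ‖u‖^2) with hcst
  have hgauss : Integrable (fun u : E => rexp (-(2*t^2) * ‖u‖^2)) volume :=
    gauss_int (by positivity)
  have htrans : ∀ x : E, ∫ z : E, rexp (-(2*t^2) * ‖x - z‖^2) = cst := by
    intro x
    have : ∀ z : E, rexp (-(2*t^2) * ‖x - z‖^2) = rexp (-(2*t^2) * ‖z - x‖^2) := by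
      intro z; rw [norm_sub_rev]
    simp_rw [this]
    exact integral_sub_right_eq_self (fun u : E => rexp (-(2*t^2) * ‖u‖^2)) x
  set f : E × E → ℝ := fun q => g q.2 * rexp (-(2*t^2) * ‖q.1 - q.2‖^2) with hf
  have hfc : Continuous f :=
    (hg.comp continuous_snd).mul
      (Real.continuous_exp.comp (continuous_const.mul (r_meas.pow 2)))
  have hsec : ∀ x : E, Integrable (fun z => f (x, z)) volume := by
    intro x
    apply Integrable.bdd_mul _ hg.aestronglyMeasurable (Filter.Eventually.of_forall fun z => by
      rw [Real.norm_eq_abs]; exact hM z)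
    have : (fun z : E => rexp (-(2*t^2) * ‖x - z‖^2))
        = fun z : E => rexp (-(2*t^2) * ‖z - x‖^2) := by
      funext z; rw [norm_sub_rev]
    rw [this]
    exact hgauss.comp_sub_right x
  have hint : Integrable f (α.prod volume) := by
    rw [integrable_prod_iff hfc.aestronglyMeasurable]
    refine ⟨Filter.Eventually.of_forall hsec, ?_⟩
    apply Integrable.mono' (integrable_const (M * cst))
      hfc.aestronglyMeasurable.norm.integral_prod_right'
    refine Filter.Eventually.of_forall fun x => ?_
    rw [Real.norm_eq_abs, abs_of_nonneg (integral_nonneg fun z => norm_nonneg _)]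
    calc ∫ z : E, ‖f (x, z)‖
        ≤ ∫ z : E, M * rexp (-(2*t^2) * ‖x - z‖^2) := by
          apply integral_mono_of_nonneg (Filter.Eventually.of_forall fun z => norm_nonneg _)
            (((hgauss.comp_sub_right x).congr (Filter.Eventually.of_forall fun z => by
              rw [norm_sub_rev])).const_mul M)
          refine Filter.Eventually.of_forall fun z => ?_
          show ‖g z * rexp (-(2*t^2) * ‖x - z‖^2)‖ ≤ M * rexp (-(2*t^2) * ‖x - z‖^2)
          rw [norm_mul, Real.norm_eq_abs, Real.norm_eq_abs,
            abs_of_nonneg (Real.exp_nonneg _)]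
          exact mul_le_mul_of_nonneg_right (hM z) (Real.exp_nonneg _)
      _ = M * cst := by rw [integral_const_mul, htrans x]
  have hswap : ∫ x, ∫ z : E, f (x, z) ∂volume ∂α
      = ∫ z : E, ∫ x, f (x, z) ∂α ∂volume := by
    rw [← integral_prod f hint, integral_prod_symm f hint]
  have e1 : ∀ x : E, ∫ v : E, g (x + t⁻¹ • v) * rexp (-(2:ℝ) * ‖v‖^2)
      = t^d * ∫ z : E, f (x, z) := cov ht g
  simp only [e1]
  rw [integral_const_mul, hswap]
  congr 1
  apply integral_congr_ae
  refine Filter.Eventually.of_forall fun z => ?_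
  show ∫ x, g z * rexp (-(2*t^2) * ‖x - z‖^2) ∂α = g z * pfun α t z
  rw [integral_const_mul, pfun]

lemma measures_eq (μ ν : Measure E) [IsProbabilityMeasure μ] [IsProbabilityMeasure ν]
    (hseq : ∀ n : ℕ, ∃ t : ℝ, (n:ℝ) < t ∧ pfun μ t = pfun ν t)
    {g : E → ℝ} (hg : Continuous g) {M : ℝ} (hM : ∀ x, |g x| ≤ M) :
    ∫ x, g x ∂μ = ∫ x, g x ∂ν := by
  have hM0 : 0 ≤ M := le_trans (abs_nonneg _) (hM 0)
  choose t ht1 ht2 using hseq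
  have htpos : ∀ n, 0 < t n := fun n => lt_of_le_of_lt (Nat.cast_nonneg n) (ht1 n)
  have htop : Filter.Tendsto t Filter.atTop Filter.atTop :=
    Filter.tendsto_atTop_mono (fun n => (ht1 n).le) tendsto_natCast_atTop_atTop
  have hinv : Filter.Tendsto (fun n => (t n)⁻¹) Filter.atTop (nhds 0) :=
    tendsto_inv_atTop_zero.comp htop
  have hG2 : 0 < G2 d := G2_pos
  have hbint : Integrable (fun v : E => M * rexp (-(2:ℝ) * ‖v‖^2)) volume :=
    (gauss_int (by norm_num)).const_mul M
  set F : ℕ → E → ℝ := fun n x =>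
    (G2 d)⁻¹ * ∫ v : E, g (x + (t n)⁻¹ • v) * rexp (-(2:ℝ) * ‖v‖^2) with hFdef
  have hcont2 : ∀ (c : ℝ) (x : E), Continuous
      (fun v : E => g (x + c • v) * rexp (-(2:ℝ) * ‖v‖^2)) := by
    intro c x
    exact (hg.comp (continuous_const.add (continuous_id.const_smul c))).mul
      (Real.continuous_exp.comp (continuous_const.mul (continuous_norm.pow 2)))
  have hbd : ∀ (c : ℝ) (x : E) (v : E),
      ‖g (x + c • v) * rexp (-(2:ℝ) * ‖v‖^2)‖ ≤ M * rexp (-(2:ℝ) * ‖v‖^2) := by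
    intro c x v
    rw [norm_mul, Real.norm_eq_abs, Real.norm_eq_abs, abs_of_nonneg (Real.exp_nonneg _)]
    exact mul_le_mul_of_nonneg_right (hM _) (Real.exp_nonneg _)
  have hFbound : ∀ n x, ‖F n x‖ ≤ M := by
    intro n x
    rw [hFdef]
    simp only [norm_mul, Real.norm_eq_abs, abs_of_nonneg (inv_nonneg.mpr hG2.le)]
    have h1 : ‖∫ v : E, g (x + (t n)⁻¹ • v) * rexp (-(2:ℝ) * ‖v‖^2)‖
        ≤ ∫ v : E, M * rexp (-(2:ℝ) * ‖v‖^2) :=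
      norm_integral_le_of_norm_le hbint
        (Filter.Eventually.of_forall fun v => hbd _ x v)
    rw [integral_const_mul] at h1
    rw [← Real.norm_eq_abs (∫ v : E, _)]
    calc (G2 d)⁻¹ * ‖∫ v : E, g (x + (t n)⁻¹ • v) * rexp (-(2:ℝ) * ‖v‖^2)‖
        ≤ (G2 d)⁻¹ * (M * G2 d) := by
          apply mul_le_mul_of_nonneg_left _ (inv_nonneg.mpr hG2.le)
          exact h1
      _ = M := by field_simp
  have hFtend : ∀ x : E, Filter.Tendsto (fun n => F n x) Filter.atTop (nhds (g x)) := by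
    intro x
    have hptw : ∀ v : E, Filter.Tendsto (fun n => g (x + (t n)⁻¹ • v) * rexp (-(2:ℝ) * ‖v‖^2))
        Filter.atTop (nhds (g x * rexp (-(2:ℝ) * ‖v‖^2))) := by
      intro v
      apply Filter.Tendsto.mul_const
      have h2 : Filter.Tendsto (fun n => x + (t n)⁻¹ • v) Filter.atTop (nhds (x + (0:ℝ) • v)) :=
        tendsto_const_nhds.add (hinv.smul_const v)
      rw [zero_smul, add_zero] at h2
      exact (hg.tendsto x).comp h2
    have hmain : Filter.Tendsto
        (fun n => ∫ v : E, g (x + (t n)⁻¹ • v) * rexp (-(2:ℝ) * ‖v‖^2))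
        Filter.atTop (nhds (∫ v : E, g x * rexp (-(2:ℝ) * ‖v‖^2))) := by
      apply tendsto_integral_of_dominated_convergence (fun v : E => M * rexp (-(2:ℝ) * ‖v‖^2))
        (fun n => (hcont2 _ x).aestronglyMeasurable) hbint
        (fun n => Filter.Eventually.of_forall fun v => hbd _ x v)
        (Filter.Eventually.of_forall fun v => hptw v)
    have : ∫ v : E, g x * rexp (-(2:ℝ) * ‖v‖^2) = g x * G2 d := by
      rw [integral_const_mul]; rfl
    rw [this] at hmain
    have := hmain.const_mul (G2 d)⁻¹
    have heq : (G2 d)⁻¹ * (g x * G2 d) = g x := by field_simp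
    rw [heq] at this
    exact this
  have hFint : ∀ n, ∫ x, F n x ∂μ = ∫ x, F n x ∂ν := by
    intro n
    have hμ' : ∫ x, F n x ∂μ
        = (G2 d)⁻¹ * ((t n)^d * ∫ z : E, g z * pfun μ (t n) z) := by
      rw [hFdef, integral_const_mul, key_int μ (htpos n) hg hM]
    have hν' : ∫ x, F n x ∂ν
        = (G2 d)⁻¹ * ((t n)^d * ∫ z : E, g z * pfun ν (t n) z) := by
      rw [hFdef, integral_const_mul, key_int ν (htpos n) hg hM]
    rw [hμ', hν', ht2 n]
  have hDCT : ∀ (α : Measure E), IsProbabilityMeasure α →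
      Filter.Tendsto (fun n => ∫ x, F n x ∂α) Filter.atTop (nhds (∫ x, g x ∂α)) := by
    intro α hα
    apply tendsto_integral_of_dominated_convergence (fun _ : E => M)
    · intro n
      apply Continuous.aestronglyMeasurable
      apply continuous_const.mul
      apply continuous_of_dominated (bound := fun v : E => M * rexp (-(2:ℝ) * ‖v‖^2))
      · exact fun x => (hcont2 _ x).aestronglyMeasurable
      · exact fun x => Filter.Eventually.of_forall fun v => hbd _ x v
      · exact hbint
      · refine Filter.Eventually.of_forall fun v => ?_
        exact (hg.comp (continuous_id.add continuous_const)).mul continuous_const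
    · exact integrable_const M
    · exact fun n => Filter.Eventually.of_forall fun x => hFbound n x
    · exact Filter.Eventually.of_forall fun x => hFtend x
  exact tendsto_nhds_unique (hDCT μ inferInstance)
    (by simpa only [hFint] using hDCT ν inferInstance)

end Euclid

theorem stmt12 {d : ℕ} (μ ν : Measure (EuclideanSpace ℝ (Fin d)))
    [IsProbabilityMeasure μ] [IsProbabilityMeasure ν]
    (hμ : Integrable (fun x => ‖x‖) μ) (hν : Integrable (fun x => ‖x‖) ν) :
    0 ≤ MMD2 μ ν ∧ (MMD2 μ ν = 0 ↔ μ = ν) := by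
  have hA := lemA μ μ hμ hμ
  have hB := lemA μ ν hμ hν
  have hC := lemA ν ν hν hν
  set gfun : ℝ → ℝ := fun t => (Kt μ μ t - 2*Kt μ ν t + Kt ν ν t)/t^2 with hgfun
  have hgeq : ∀ t : ℝ, (Kt μ μ t - 1)/t^2 - 2*((Kt μ ν t - 1)/t^2) + (Kt ν ν t - 1)/t^2
      = gfun t := by
    intro t
    rw [hgfun]
    show _ = (Kt μ μ t - 2*Kt μ ν t + Kt ν ν t)/t^2
    rw [mul_div_assoc' 2, div_sub_div_same, ← add_div]
    congr 1
    ring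
  have hcomb : IntegrableOn (fun t : ℝ => (Kt μ μ t - 1)/t^2 - 2*((Kt μ ν t - 1)/t^2)
      + (Kt ν ν t - 1)/t^2) (Ioi 0) := (hA.1.sub (hB.1.const_mul 2)).add hC.1
  have hgint : IntegrableOn gfun (Ioi 0) :=
    hcomb.congr (Filter.Eventually.of_forall fun t => hgeq t)
  have hgval : ∫ t in Ioi (0:ℝ), gfun t = C0 * MMD2 μ ν := by
    have e1 : ∫ t in Ioi (0:ℝ), gfun t = ∫ t in Ioi (0:ℝ), ((Kt μ μ t - 1)/t^2
        - 2*((Kt μ ν t - 1)/t^2) + (Kt ν ν t - 1)/t^2) :=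
      integral_congr_ae (Filter.Eventually.of_forall fun t => (hgeq t).symm)
    have hint1 : IntegrableOn (fun t : ℝ => (Kt μ μ t - 1)/t^2
        - 2*((Kt μ ν t - 1)/t^2)) (Ioi 0) := hA.1.sub (hB.1.const_mul 2)
    rw [e1, integral_add hint1 hC.1,
      integral_sub hA.1 (hB.1.const_mul 2), integral_const_mul,
      hA.2, hB.2, hC.2, MMD2]
    ring
  have hnonneg : 0 ≤ ∫ t in Ioi (0:ℝ), gfun t := by
    apply setIntegral_nonneg measurableSet_Ioi
    intro t ht
    exact div_nonneg (H_nonneg μ ν ht).1 (sq_nonneg t)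
  have hMMD : 0 ≤ MMD2 μ ν := by nlinarith [C0_pos]
  refine ⟨hMMD, ?_, ?_⟩
  · intro h0
    have hzero : ∫ t in Ioi (0:ℝ), gfun t = 0 := by rw [hgval, h0, mul_zero]
    have hpos : 0 ≤ᵐ[(volume : Measure ℝ).restrict (Ioi 0)] gfun := by
      filter_upwards [ae_restrict_mem measurableSet_Ioi] with t ht
      exact div_nonneg (H_nonneg μ ν ht).1 (sq_nonneg t)
    have hae : ∀ᵐ t ∂((volume : Measure ℝ).restrict (Ioi 0)), gfun t = 0 :=
      (integral_eq_zero_iff_of_nonneg_ae hpos hgint).mp hzero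
    have hae2 : ∀ᵐ t ∂((volume : Measure ℝ).restrict (Ioi 0)), pfun μ t = pfun ν t := by
      filter_upwards [hae, ae_restrict_mem measurableSet_Ioi] with t hg0 ht
      apply (H_nonneg μ ν ht).2
      have ht2 : (t:ℝ)^2 ≠ 0 := pow_ne_zero 2 (ne_of_gt ht)
      have : (Kt μ μ t - 2*Kt μ ν t + Kt ν ν t)/t^2 = 0 := hg0
      field_simp at this
      exact (div_eq_zero_iff.mp this).resolve_right ht2
    have hseq : ∀ n : ℕ, ∃ s : ℝ, (n:ℝ) < s ∧ pfun μ s = pfun ν s := by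
      intro n
      by_contra hc
      push_neg at hc
      have hbad : ∀ᵐ s ∂((volume : Measure ℝ).restrict (Ioi 0)), ¬ ((n:ℝ) < s) := by
        filter_upwards [hae2] with s hs hlt
        exact hc s hlt hs
      rw [ae_iff] at hbad
      simp only [not_not] at hbad
      have : {s : ℝ | (n:ℝ) < s} = Ioi (n:ℝ) := rfl
      rw [this, Measure.restrict_apply measurableSet_Ioi] at hbad
      have hioi : Ioi (n:ℝ) ∩ Ioi (0:ℝ) = Ioi (n:ℝ) := by
        rw [Ioi_inter_Ioi, max_eq_left (Nat.cast_nonneg n)]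
      rw [hioi, Real.volume_Ioi] at hbad
      exact ENNReal.top_ne_zero hbad
    apply ext_of_forall_lintegral_eq_of_IsFiniteMeasure
    intro f
    have hgc : Continuous fun x : EuclideanSpace ℝ (Fin d) => ((f x : ℝ≥0) : ℝ) :=
      NNReal.continuous_coe.comp f.continuous
    obtain ⟨Cb, hCb⟩ := f.bounded
    have hgb : ∀ x : EuclideanSpace ℝ (Fin d), |((f x : ℝ≥0) : ℝ)| ≤ Cb + ((f 0 : ℝ≥0) : ℝ) := by
      intro x
      rw [abs_of_nonneg (f x).coe_nonneg]
      have h := hCb x 0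
      rw [NNReal.dist_eq] at h
      have := abs_sub_abs_le_abs_sub ((f x : ℝ≥0) : ℝ) ((f 0 : ℝ≥0) : ℝ)
      rw [abs_of_nonneg (f x).coe_nonneg, abs_of_nonneg (f 0).coe_nonneg] at this
      linarith
    have hre : ∫ x, ((f x : ℝ≥0) : ℝ) ∂μ = ∫ x, ((f x : ℝ≥0) : ℝ) ∂ν :=
      measures_eq μ ν hseq hgc hgb
    have h1 := BoundedContinuousFunction.toReal_lintegral_coe_eq_integral f μ
    have h2 := BoundedContinuousFunction.toReal_lintegral_coe_eq_integral f ν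
    have hfin1 := BoundedContinuousFunction.lintegral_lt_top_of_nnreal μ f
    have hfin2 := BoundedContinuousFunction.lintegral_lt_top_of_nnreal ν f
    rw [← ENNReal.toReal_eq_toReal_iff' hfin1.ne hfin2.ne]
    rw [h1, h2]
    exact hre
  · intro h
    subst h
    rw [MMD2]
    ring
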